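/- Let C be a small category, F, G : Cᵒᵖ ⥤ Type presheaves on C, and φ : F ⟶ G a morphism of presheaves. Then the induced functor ∫φ : ∫F ⥤ ∫G on categories of elements has a right adjoint if and only if, for every object c of C and every morphism η : y(c) ⟶ G of presheaves, the pullback presheaf F ×_G y(c) (the pullback of φ : F ⟶ G along η in the category of presheaves on C) is a representable presheaf. -/

import Mathlib

open CategoryTheory CategoryTheory.Limits Opposite

universe u

/-- The category of elements of a presheaf `F : Cᵒᵖ ⥤ Type u`, with objects pairs
`(c, x ∈ F(c))` and morphisms `(c, x) ⟶ (d, y)` the morphisms `f : c ⟶ d` of `C` with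
`F(f)(y) = x`. -/
structure PElt {C : Type u} [SmallCategory C] (F : Cᵒᵖ ⥤ Type u) : Type u where
  base : C
  elt : F.obj (op base)

namespace PElt

variable {C : Type u} [SmallCategory C]

instance (F : Cᵒᵖ ⥤ Type u) : Category (PElt F) where
  Hom x y := { f : x.base ⟶ y.base // F.map f.op y.elt = x.elt }
  id x := ⟨𝟙 x.base, by rw [op_id, FunctorToTypes.map_id_apply]⟩
  comp {x y z} f g := ⟨f.1 ≫ g.1, by rw [op_comp, FunctorToTypes.map_comp_apply, g.2, f.2]⟩
  id_comp f := Subtype.ext (Category.id_comp f.1)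
  comp_id f := Subtype.ext (Category.comp_id f.1)
  assoc f g h := Subtype.ext (Category.assoc f.1 g.1 h.1)

/-- The functor `∫φ : ∫F ⥤ ∫G` on categories of elements induced by a morphism of
presheaves `φ : F ⟶ G`, sending `(c, x)` to `(c, φ_c(x))`. -/
def map {F G : Cᵒᵖ ⥤ Type u} (φ : F ⟶ G) : PElt F ⥤ PElt G where
  obj x := ⟨x.base, φ.app _ x.elt⟩
  map {x y} f := ⟨f.1, by rw [← FunctorToTypes.naturality, f.2]⟩
  map_id _ := rfl
  map_comp _ _ := rfl

/-- The projection `π : ∫F ⥤ C` from the category of elements of a presheaf. -/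
def proj (F : Cᵒᵖ ⥤ Type u) : PElt F ⥤ C where
  obj x := x.base
  map f := f.1
  map_id _ := rfl
  map_comp _ _ := rfl

theorem map_comp' {F G H : Cᵒᵖ ⥤ Type u} (φ : F ⟶ G) (ψ : G ⟶ H) :
    PElt.map (φ ≫ ψ) = PElt.map φ ⋙ PElt.map ψ := rfl

end PElt

namespace RepProofAux

variable {C : Type u} [SmallCategory C] {F G : Cᵒᵖ ⥤ Type u} (φ : F ⟶ G)
  {c : C} (η : yoneda.obj c ⟶ G)

/-- Elements of the pullback are determined by their two projections. -/
theorem elt_ext {b : C} {k k' : (pullback φ η).obj (op b)}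
    (h1 : (pullback.fst φ η).app (op b) k = (pullback.fst φ η).app (op b) k')
    (h2 : (pullback.snd φ η).app (op b) k = (pullback.snd φ η).app (op b) k') : k = k' := by
  apply yonedaEquiv.symm.injective
  apply pullback.hom_ext
  · rw [yonedaEquiv_symm_naturality_right, yonedaEquiv_symm_naturality_right, h1]
  · rw [yonedaEquiv_symm_naturality_right, yonedaEquiv_symm_naturality_right, h2]

/-- Build an element of the pullback presheaf from compatible data. -/
noncomputable def mkElt {b : C} (x : F.obj (op b)) (f : b ⟶ c)
    (h : φ.app (op b) x = G.map f.op (yonedaEquiv η)) : (pullback φ η).obj (op b) :=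
  yonedaEquiv (pullback.lift (yonedaEquiv.symm x) (yoneda.map f) (by
    apply yonedaEquiv.injective
    rw [yonedaEquiv_comp, yonedaEquiv_comp, Equiv.apply_symm_apply, yonedaEquiv_yoneda_map,
      h, map_yonedaEquiv]))

@[simp] theorem mkElt_fst {b : C} (x : F.obj (op b)) (f : b ⟶ c)
    (h : φ.app (op b) x = G.map f.op (yonedaEquiv η)) :
    (pullback.fst φ η).app (op b) (mkElt φ η x f h) = x := by
  rw [mkElt, ← yonedaEquiv_comp, pullback.lift_fst, Equiv.apply_symm_apply]

@[simp] theorem mkElt_snd {b : C} (x : F.obj (op b)) (f : b ⟶ c)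
    (h : φ.app (op b) x = G.map f.op (yonedaEquiv η)) :
    (pullback.snd φ η).app (op b) (mkElt φ η x f h) = f := by
  rw [mkElt, ← yonedaEquiv_comp, pullback.lift_snd]
  exact yonedaEquiv_yoneda_map f

theorem elt_cond {b : C} (k : (pullback φ η).obj (op b)) :
    φ.app (op b) ((pullback.fst φ η).app (op b) k) =
      G.map ((pullback.snd φ η).app (op b) k).op (yonedaEquiv η) := by
  rw [map_yonedaEquiv]
  exact ConcreteCategory.congr_hom (NatTrans.congr_app (pullback.condition (f := φ) (g := η)) (op b)) k

theorem map_elt_fst {b b' : C} (g : b ⟶ b') (k : (pullback φ η).obj (op b')) :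
    (pullback.fst φ η).app (op b) ((pullback φ η).map g.op k) =
      F.map g.op ((pullback.fst φ η).app (op b') k) :=
  FunctorToTypes.naturality (pullback.fst φ η) g.op k

theorem map_elt_snd {b b' : C} (g : b ⟶ b') (k : (pullback φ η).obj (op b')) :
    (pullback.snd φ η).app (op b) ((pullback φ η).map g.op k) =
      g ≫ (pullback.snd φ η).app (op b') k :=
  FunctorToTypes.naturality (pullback.snd φ η) g.op k

/-- The object of the costructured arrow category attached to an element of the pullback. -/
noncomputable def obj {b : C} (k : (pullback φ η).obj (op b)) :
    CostructuredArrow (PElt.map φ) (⟨c, yonedaEquiv η⟩ : PElt G) :=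
  CostructuredArrow.mk (Y := ⟨b, (pullback.fst φ η).app (op b) k⟩)
    (⟨(pullback.snd φ η).app (op b) k, (elt_cond φ η k).symm⟩ :
      (PElt.map φ).obj ⟨b, (pullback.fst φ η).app (op b) k⟩ ⟶ (⟨c, yonedaEquiv η⟩ : PElt G))

/-- A morphism in the costructured arrow category, from compatible data. -/
def homTo (A B : CostructuredArrow (PElt.map φ) (⟨c, yonedaEquiv η⟩ : PElt G))
    (g : A.left.base ⟶ B.left.base)
    (h1 : F.map g.op B.left.elt = A.left.elt)
    (h2 : g ≫ B.hom.1 = A.hom.1) : A ⟶ B :=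
  CostructuredArrow.homMk ⟨g, h1⟩ (Subtype.ext h2)

theorem hom_spec {A B : CostructuredArrow (PElt.map φ) (⟨c, yonedaEquiv η⟩ : PElt G)}
    (m : A ⟶ B) : m.left.1 ≫ B.hom.1 = A.hom.1 :=
  congrArg Subtype.val (CostructuredArrow.w m)

/-- The key step: the costructured-arrow category over `(c, yonedaEquiv η)` has a terminal
object iff the pullback presheaf is representable. -/
theorem key (φ : F ⟶ G) (c : C) (η : yoneda.obj c ⟶ G) :
    HasTerminal (CostructuredArrow (PElt.map φ) (⟨c, yonedaEquiv η⟩ : PElt G)) ↔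
      (pullback φ η).IsRepresentable := by
  constructor
  · intro h
    let T : CostructuredArrow (PElt.map φ) (⟨c, yonedaEquiv η⟩ : PElt G) := ⊤_ _
    let k₀ : (pullback φ η).obj (op T.left.base) := mkElt φ η T.left.elt T.hom.1 T.hom.2.symm
    have hfst : ∀ {b : C} (g : b ⟶ T.left.base),
        (pullback.fst φ η).app (op b) ((pullback φ η).map g.op k₀) = F.map g.op T.left.elt := by
      intro b g; rw [map_elt_fst]; exact congrArg (fun x => F.map g.op x) (mkElt_fst φ η _ _ _)
    have hsnd : ∀ {b : C} (g : b ⟶ T.left.base),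
        (pullback.snd φ η).app (op b) ((pullback φ η).map g.op k₀) = g ≫ T.hom.1 := by
      intro b g; rw [map_elt_snd]; exact congrArg (fun x => g ≫ x) (mkElt_snd φ η _ _ _)
    have hb : ∀ {b : C} (k : (pullback φ η).obj (op b)) (m : obj φ η k ⟶ T),
        (pullback φ η).map m.left.1.op k₀ = k := by
      intro b k m
      refine elt_ext φ η ?_ ?_
      · rw [hfst]; exact m.left.2
      · rw [hsnd]; exact hom_spec φ η m
    refine Functor.RepresentableBy.isRepresentable (Y := T.left.base)
      { homEquiv := fun {b} => Equiv.ofBijective (fun g => (pullback φ η).map g.op k₀) ⟨?_, ?_⟩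
        homEquiv_comp := fun f g => by
          show (pullback φ η).map (f ≫ g).op k₀ =
            (pullback φ η).map f.op ((pullback φ η).map g.op k₀)
          rw [op_comp, FunctorToTypes.map_comp_apply] }
    · intro g g' hgg'
      simp only at hgg'
      have e := Subsingleton.elim
        (homTo φ η (obj φ η ((pullback φ η).map g.op k₀)) T g (hfst g).symm (hsnd g).symm)
        (homTo φ η (obj φ η ((pullback φ η).map g.op k₀)) T g'
          (by show F.map g'.op T.left.elt =
                (pullback.fst φ η).app (op b) ((pullback φ η).map g.op k₀)
              rw [hgg', hfst])
          (by show g' ≫ T.hom.1 =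
                (pullback.snd φ η).app (op b) ((pullback φ η).map g.op k₀)
              rw [hgg', hsnd]))
      exact congrArg (fun z => z.left.1) e
    · intro k
      exact ⟨(terminal.from (obj φ η k)).left.1, hb k (terminal.from (obj φ η k))⟩
  · intro h
    letI := h
    let d := (pullback φ η).reprX
    let r := (pullback φ η).representableBy
    let k₀ : (pullback φ η).obj (op d) := r.homEquiv (𝟙 d)
    have hmap : ∀ {b : C} (g : b ⟶ d), (pullback φ η).map g.op k₀ = r.homEquiv g := by
      intro b g
      show (pullback φ η).map g.op (r.homEquiv (𝟙 d)) = r.homEquiv g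
      rw [← r.homEquiv_comp, Category.comp_id]
    refine IsTerminal.hasTerminal (X := obj φ η k₀) (IsTerminal.ofUniqueHom (fun A =>
      homTo φ η A (obj φ η k₀)
        (r.homEquiv.symm (mkElt φ η A.left.elt A.hom.1 A.hom.2.symm))
        ((map_elt_fst φ η _ k₀).symm.trans
          (by rw [hmap, Equiv.apply_symm_apply]; exact mkElt_fst φ η _ _ _))
        ((map_elt_snd φ η _ k₀).symm.trans
          (by rw [hmap, Equiv.apply_symm_apply]; exact mkElt_snd φ η _ _ _))) ?_)
    · intro A m
      apply CostructuredArrow.hom_ext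
      apply Subtype.ext
      show m.left.1 = r.homEquiv.symm (mkElt φ η A.left.elt A.hom.1 A.hom.2.symm)
      apply r.homEquiv.injective
      rw [Equiv.apply_symm_apply]; refine (hmap _).symm.trans ?_
      refine elt_ext φ η ?_ ?_
      · refine (map_elt_fst φ η (m.left.1 : A.left.base ⟶ d) k₀).trans (Eq.trans ?_ (mkElt_fst φ η _ _ _).symm); exact m.left.2
      · refine (map_elt_snd φ η (m.left.1 : A.left.base ⟶ d) k₀).trans (Eq.trans ?_ (mkElt_snd φ η _ _ _).symm); exact hom_spec φ η m

end RepProofAux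

/-- A morphism of presheaves `φ : F ⟶ G` is representable (the induced functor
`∫φ : ∫F ⥤ ∫G` has a right adjoint) iff for every `c : C` and every
`η : y(c) ⟶ G` the pullback presheaf `F ×_G y(c)` is representable. -/
theorem representable_map_iff {C : Type u} [SmallCategory C]
    {F G : Cᵒᵖ ⥤ Type u} (φ : F ⟶ G) :
    (PElt.map φ).IsLeftAdjoint ↔
      ∀ (c : C) (η : yoneda.obj c ⟶ G), (pullback φ η).IsRepresentable := by
  rw [isLeftAdjoint_iff_hasTerminal_costructuredArrow]
  constructor
  · intro h c η
    exact (RepProofAux.key φ c η).1 (h _)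
  · intro h A
    obtain ⟨c, t⟩ := A
    have := (RepProofAux.key φ c (yonedaEquiv.symm t)).2 (h c _)
    rwa [Equiv.apply_symm_apply] at this
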